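/- Let d ≥ 2 and ℓ ∈ ℕ. The real vector space of polynomials P in d real variables that are homogeneous of degree ℓ and harmonic (i.e., Σ_{i=1}^{d} ∂²P/∂x_i² = 0) has finite dimension equal to Λ_{ℓ,d} := C(ℓ+d-1, d-1) - C(ℓ+d-3, d-1), where C(n,k) denotes the binomial coefficient (with C(n,k) = 0 when n < k). -/

import Mathlib

open MvPolynomial

/-- The Laplacian on polynomials in `d` variables, as a linear map. -/
noncomputable def polyLaplacian (d : ℕ) :
    MvPolynomial (Fin d) ℝ →ₗ[ℝ] MvPolynomial (Fin d) ℝ :=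
  ∑ i : Fin d, (pderiv i).toLinearMap ∘ₗ (pderiv i).toLinearMap

/-- The space of polynomials in `d` real variables which are homogeneous of degree `ℓ`
and harmonic. -/
noncomputable def harmonicHomogeneous (d ℓ : ℕ) : Submodule ℝ (MvPolynomial (Fin d) ℝ) :=
  homogeneousSubmodule (Fin d) ℝ ℓ ⊓ LinearMap.ker (polyLaplacian d)

set_option synthInstance.maxHeartbeats 1000000
set_option maxHeartbeats 1000000

variable {d : ℕ}

variable {d : ℕ}

noncomputable def wfac (d : ℕ) (a : Fin d →₀ ℕ) : ℝ := ∏ i, (Nat.factorial (a i) : ℝ)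

lemma wfac_pos (a : Fin d →₀ ℕ) : 0 < wfac d a :=
  Finset.prod_pos fun i _ => by exact_mod_cast (a i).factorial_pos

noncomputable def fischer (d : ℕ) (p q : MvPolynomial (Fin d) ℝ) : ℝ :=
  ∑ a ∈ p.support, wfac d a * coeff a p * coeff a q

lemma fischer_eq_sum_of_subset {p q : MvPolynomial (Fin d) ℝ} {S : Finset (Fin d →₀ ℕ)}
    (h : p.support ⊆ S) : fischer d p q = ∑ a ∈ S, wfac d a * coeff a p * coeff a q := by
  refine Finset.sum_subset h fun a _ ha => ?_
  rw [notMem_support_iff.mp ha]; ring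

lemma fischer_add_left (p p' q : MvPolynomial (Fin d) ℝ) :
    fischer d (p + p') q = fischer d p q + fischer d p' q := by
  rw [fischer_eq_sum_of_subset (S := p.support ∪ p'.support) (support_add),
    fischer_eq_sum_of_subset (S := p.support ∪ p'.support) Finset.subset_union_left,
    fischer_eq_sum_of_subset (S := p.support ∪ p'.support) Finset.subset_union_right,
    ← Finset.sum_add_distrib]
  exact Finset.sum_congr rfl fun a _ => by rw [coeff_add]; ring

lemma fischer_zero_left (q : MvPolynomial (Fin d) ℝ) : fischer d 0 q = 0 := by
  simp [fischer]

lemma fischer_sum_left {ι : Type*} (s : Finset ι) (f : ι → MvPolynomial (Fin d) ℝ)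
    (q : MvPolynomial (Fin d) ℝ) : fischer d (∑ i ∈ s, f i) q = ∑ i ∈ s, fischer d (f i) q := by
  classical
  induction s using Finset.induction with
  | empty => simp [fischer_zero_left]
  | insert _ _ h ih => rw [Finset.sum_insert h, Finset.sum_insert h, fischer_add_left, ih]

lemma fischer_add_right (p q q' : MvPolynomial (Fin d) ℝ) :
    fischer d p (q + q') = fischer d p q + fischer d p q' := by
  unfold fischer
  rw [← Finset.sum_add_distrib]
  exact Finset.sum_congr rfl fun a _ => by rw [coeff_add]; ring

lemma fischer_monomial_left (s : Fin d →₀ ℕ) (c : ℝ) (q : MvPolynomial (Fin d) ℝ) :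
    fischer d (monomial s c) q = wfac d s * c * coeff s q := by
  unfold fischer
  rcases eq_or_ne c 0 with rfl | hc
  · simp
  · rw [support_monomial, if_neg hc, Finset.sum_singleton, coeff_monomial, if_pos rfl]

lemma eq_zero_of_fischer_self (p : MvPolynomial (Fin d) ℝ) (h : fischer d p p = 0) : p = 0 := by
  unfold fischer at h
  have h2 : ∀ a ∈ p.support, wfac d a * coeff a p * coeff a p = 0 := by
    rw [Finset.sum_eq_zero_iff_of_nonneg] at h
    · exact h
    · intro a _
      rw [mul_assoc]
      exact mul_nonneg (wfac_pos a).le (mul_self_nonneg _)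
  ext a
  by_cases ha : a ∈ p.support
  · have := h2 a ha
    rcases mul_eq_zero.mp this with h' | h'
    · rcases mul_eq_zero.mp h' with h'' | h''
      · exact absurd h'' (wfac_pos a).ne'
      · simpa using h''
    · simpa using h'
  · simpa using notMem_support_iff.mp ha


lemma wfac_add_single_two (x : Fin d →₀ ℕ) (i : Fin d) :
    wfac d (x + Finsupp.single i 2) = ((x i + 2) * (x i + 1) : ℝ) * wfac d x := by
  unfold wfac
  rw [← Finset.mul_prod_erase _ _ (Finset.mem_univ i),
    ← Finset.mul_prod_erase (f := fun j => ((x j).factorial : ℝ)) _ (Finset.mem_univ i)]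
  have h2 : ∀ j ∈ Finset.univ.erase i,
      ((((x + Finsupp.single i 2 : Fin d →₀ ℕ)) j).factorial : ℝ) = ((x j).factorial : ℝ) := by
    intro j hj
    have hji : (Finsupp.single i 2 : Fin d →₀ ℕ) j = 0 :=
      Finsupp.single_eq_of_ne' (Finset.ne_of_mem_erase hj).symm
    rw [Finsupp.add_apply, hji, add_zero]
  rw [Finset.prod_congr rfl h2]
  have h1 : (x + Finsupp.single i 2 : Fin d →₀ ℕ) i = x i + 2 := by simp
  rw [h1]
  have h3 : (x i + 2).factorial = (x i + 2) * ((x i + 1) * (x i).factorial) := by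
    rw [show x i + 2 = (x i + 1) + 1 from rfl, Nat.factorial_succ, Nat.factorial_succ]
  rw [h3]
  push_cast
  ring


lemma degree_eq_sum (d : ℕ) (a : Fin d →₀ ℕ) : a.degree = a.sum fun _ => id := rfl

noncomputable def symEquiv (d ℓ : ℕ) : ↑{a : Fin d →₀ ℕ | a.degree = ℓ} ≃ Sym (Fin d) ℓ where
  toFun a := ⟨Finsupp.toMultiset a.1, by rw [Finsupp.card_toMultiset, ← degree_eq_sum, a.2]⟩
  invFun m := ⟨Multiset.toFinsupp m.1, by show Finsupp.degree _ = ℓ; rw [degree_eq_sum, Multiset.toFinsupp_sum_eq, m.2]⟩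
  left_inv a := by ext : 1; simp
  right_inv m := by ext : 1; simp

noncomputable instance (d ℓ : ℕ) : Fintype ↑{a : Fin d →₀ ℕ | a.degree = ℓ} :=
  Fintype.ofEquiv _ (symEquiv d ℓ).symm

lemma card_deg (d ℓ : ℕ) : Fintype.card ↑{a : Fin d →₀ ℕ | a.degree = ℓ} = (d + ℓ - 1).choose ℓ := by
  rw [Fintype.card_congr (symEquiv d ℓ), Sym.card_sym_eq_choose, Fintype.card_fin]

noncomputable def homogBasis (d ℓ : ℕ) :
    Module.Basis {a : Fin d →₀ ℕ | a.degree = ℓ} ℝ (homogeneousSubmodule (Fin d) ℝ ℓ) :=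
  (homogeneousSubmodule_eq_finsupp_supported (σ := Fin d) (R := ℝ) ℓ ▸ basisRestrictSupport ℝ _ : _)

instance homogFinite (d ℓ : ℕ) : Module.Finite ℝ (homogeneousSubmodule (Fin d) ℝ ℓ) :=
  Module.Finite.of_basis (homogBasis d ℓ)

lemma finrank_homog (d ℓ : ℕ) :
    Module.finrank ℝ (homogeneousSubmodule (Fin d) ℝ ℓ) = (d + ℓ - 1).choose ℓ := by
  rw [Module.finrank_eq_card_basis (homogBasis d ℓ), card_deg d ℓ]
lemma fischer_core (a b : Fin d →₀ ℕ) (c e : ℝ) (i : Fin d) :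
    fischer d (pderiv i (pderiv i (monomial a c))) (monomial b e)
      = wfac d a * c * coeff a ((X i : MvPolynomial (Fin d) ℝ) ^ 2 * monomial b e) := by
  have hsub : a - Finsupp.single i 1 - Finsupp.single i 1 = a - Finsupp.single i 2 := by
    rw [tsub_tsub, ← Finsupp.single_add]
  rw [pderiv_monomial, pderiv_monomial, fischer_monomial_left, hsub]
  have hX : (X i : MvPolynomial (Fin d) ℝ) ^ 2 * monomial b e
      = monomial (Finsupp.single i 2 + b) e := by
    rw [X_pow_eq_monomial, monomial_mul, one_mul]
  rw [hX, coeff_monomial, coeff_monomial]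
  have hai : (a - Finsupp.single i 1 : Fin d →₀ ℕ) i = a i - 1 := by
    rw [Finsupp.tsub_apply, Finsupp.single_eq_same]
  rw [hai]
  by_cases hab : Finsupp.single i 2 + b = a
  · subst hab
    have h1 : (Finsupp.single i 2 + b : Fin d →₀ ℕ) - Finsupp.single i 2 = b := by
      rw [add_tsub_cancel_left]
    have h2 : (Finsupp.single i 2 + b : Fin d →₀ ℕ) i = b i + 2 := by
      simp [Finsupp.add_apply, Finsupp.single_eq_same]; ring
    rw [h1, h2, if_pos rfl, if_pos rfl, add_comm (Finsupp.single i 2) b,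
      wfac_add_single_two]
    push_cast
    ring
  · rw [if_neg hab]
    by_cases hb : b = a - Finsupp.single i 2
    · rw [if_pos hb]
      have hlt : a i < 2 := by
        by_contra hge
        push_neg at hge
        have hle : Finsupp.single i 2 ≤ a := by
          rw [Finsupp.single_le_iff]; exact hge
        exact hab (by rw [hb, add_tsub_cancel_of_le hle])
      interval_cases h : a i <;> simp
    · rw [if_neg hb]
      ring

noncomputable def rad2 (d : ℕ) : MvPolynomial (Fin d) ℝ := ∑ i, X i ^ 2

lemma polyLaplacian_apply (p : MvPolynomial (Fin d) ℝ) :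
    polyLaplacian d p = ∑ i, pderiv i (pderiv i p) := by
  simp [polyLaplacian, LinearMap.sum_apply]

theorem fischer_adjoint (p q : MvPolynomial (Fin d) ℝ) :
    fischer d (polyLaplacian d p) q = fischer d p (rad2 d * q) := by
  induction p using MvPolynomial.induction_on' with
  | add p1 p2 ih1 ih2 => rw [map_add, fischer_add_left, fischer_add_left, ih1, ih2]
  | monomial s c =>
    induction q using MvPolynomial.induction_on' with
    | add q1 q2 ih1 ih2 => rw [mul_add, fischer_add_right, fischer_add_right, ih1, ih2]
    | monomial t e =>
      rw [polyLaplacian_apply, fischer_sum_left, fischer_monomial_left, rad2,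
        Finset.sum_mul, coeff_sum, Finset.mul_sum]
      exact Finset.sum_congr rfl fun i _ => by
        rw [fischer_core]

lemma isHomogeneous_pderiv {p : MvPolynomial (Fin d) ℝ} {n : ℕ} (h : p.IsHomogeneous n)
    (i : Fin d) : (pderiv i p).IsHomogeneous (n - 1) := by
  rw [← support_sum_monomial_coeff p, map_sum]
  apply MvPolynomial.IsHomogeneous.sum
  intro a ha
  rw [pderiv_monomial]
  rcases eq_or_ne (a i) 0 with h0 | h0
  · rw [h0]; norm_num; exact isHomogeneous_zero _ _ _
  · apply isHomogeneous_monomial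
    have hdeg : a.degree = n := by
      rw [Finsupp.degree_eq_weight_one]; exact h (mem_support_iff.mp ha)
    have h1 : Finsupp.single i 1 ≤ a := by
      rw [Finsupp.single_le_iff]; omega
    have : (a - Finsupp.single i 1).degree + (Finsupp.single i 1 : Fin d →₀ ℕ).degree = n := by
      rw [Finsupp.degree_eq_weight_one] at hdeg ⊢
      rw [← map_add, tsub_add_cancel_of_le h1, hdeg]
    have hs : (Finsupp.single i 1 : Fin d →₀ ℕ).degree = 1 := by
      exact Finsupp.degree_single i 1
    omega

lemma lap_mem {ℓ : ℕ} {p : MvPolynomial (Fin d) ℝ} (h : p ∈ homogeneousSubmodule (Fin d) ℝ ℓ) :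
    polyLaplacian d p ∈ homogeneousSubmodule (Fin d) ℝ (ℓ - 2) := by
  rw [polyLaplacian_apply, mem_homogeneousSubmodule]
  apply MvPolynomial.IsHomogeneous.sum
  intro i _hi
  have := isHomogeneous_pderiv (isHomogeneous_pderiv ((mem_homogeneousSubmodule _ _).mp h) i) i
  rwa [show ℓ - 1 - 1 = ℓ - 2 by omega] at this

lemma rad2_isHomogeneous : (rad2 d).IsHomogeneous 2 :=
  MvPolynomial.IsHomogeneous.sum _ _ _ fun i _ => isHomogeneous_X_pow _ _

lemma rad2_ne_zero (hd : 1 ≤ d) : rad2 d ≠ 0 := by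
  intro h
  have := congrArg (eval (fun _ => (1 : ℝ))) h
  rw [rad2] at this
  simp at this
  omega

noncomputable def lapRestrict (d ℓ : ℕ) :
    homogeneousSubmodule (Fin d) ℝ ℓ →ₗ[ℝ] homogeneousSubmodule (Fin d) ℝ (ℓ - 2) :=
  (polyLaplacian d).restrict fun _ hx => lap_mem hx

lemma harmonic_eq_map (d ℓ : ℕ) :
    (homogeneousSubmodule (Fin d) ℝ ℓ ⊓ LinearMap.ker (polyLaplacian d)) =
      Submodule.map (homogeneousSubmodule (Fin d) ℝ ℓ).subtype
        (LinearMap.ker (lapRestrict d ℓ)) := by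
  ext x
  simp only [Submodule.mem_map, LinearMap.mem_ker, Submodule.mem_inf, Submodule.coe_subtype]
  constructor
  · rintro ⟨hx, hk⟩
    exact ⟨⟨x, hx⟩, Subtype.ext (by simpa [lapRestrict, LinearMap.restrict_apply] using hk), rfl⟩
  · rintro ⟨⟨y, hy⟩, hk, rfl⟩
    refine ⟨hy, ?_⟩
    have := congrArg Subtype.val hk
    simpa [lapRestrict, LinearMap.restrict_apply] using this

lemma lapRestrict_surjective (hd : 1 ≤ d) {ℓ : ℕ} (hℓ : 2 ≤ ℓ) :
    Function.Surjective (lapRestrict d ℓ) := by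
  have hmul : ∀ x ∈ homogeneousSubmodule (Fin d) ℝ (ℓ - 2),
      LinearMap.mulLeft ℝ (rad2 d) x ∈ homogeneousSubmodule (Fin d) ℝ ℓ := by
    intro x hx
    rw [mem_homogeneousSubmodule] at hx ⊢
    have := rad2_isHomogeneous.mul hx
    rwa [show 2 + (ℓ - 2) = ℓ by omega] at this
  set M : homogeneousSubmodule (Fin d) ℝ (ℓ - 2) →ₗ[ℝ] homogeneousSubmodule (Fin d) ℝ ℓ :=
    (LinearMap.mulLeft ℝ (rad2 d)).restrict hmul with hM
  have hinj : Function.Injective ((lapRestrict d ℓ) ∘ₗ M) := by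
    rw [← LinearMap.ker_eq_bot, LinearMap.ker_eq_bot']
    intro q hq
    have hval : polyLaplacian d (rad2 d * (q : MvPolynomial (Fin d) ℝ)) = 0 := by
      have := congrArg Subtype.val hq
      simpa [lapRestrict, hM, LinearMap.restrict_apply, LinearMap.mulLeft_apply] using this
    have h0 : fischer d (rad2 d * (q : MvPolynomial (Fin d) ℝ))
        (rad2 d * (q : MvPolynomial (Fin d) ℝ)) = 0 := by
      rw [← fischer_adjoint, hval, fischer_zero_left]
    have := eq_zero_of_fischer_self _ h0
    rcases mul_eq_zero.mp this with h | h
    · exact absurd h (rad2_ne_zero hd)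
    · exact Subtype.ext h
  have hsurj : Function.Surjective ((lapRestrict d ℓ) ∘ₗ M) :=
    LinearMap.injective_iff_surjective.mp hinj
  intro w
  obtain ⟨q, hq⟩ := hsurj w
  exact ⟨M q, hq⟩

lemma lap_eq_zero_of_le_one {ℓ : ℕ} (hℓ : ℓ ≤ 1) {p : MvPolynomial (Fin d) ℝ}
    (h : p ∈ homogeneousSubmodule (Fin d) ℝ ℓ) : polyLaplacian d p = 0 := by
  rw [polyLaplacian_apply]
  apply Finset.sum_eq_zero
  intro i _hi
  rw [← support_sum_monomial_coeff p, map_sum, map_sum]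
  apply Finset.sum_eq_zero
  intro a ha
  rw [pderiv_monomial, pderiv_monomial]
  have hdeg : a.degree = ℓ := by
    rw [Finsupp.degree_eq_weight_one]
    exact (mem_homogeneousSubmodule _ _).mp h (mem_support_iff.mp ha)
  have hle : a i ≤ 1 := le_trans (Finsupp.le_degree i a) (by omega)
  have hai : (a - Finsupp.single i 1 : Fin d →₀ ℕ) i = a i - 1 := by
    rw [Finsupp.tsub_apply, Finsupp.single_eq_same]
  rw [hai]
  interval_cases h : a i <;> simp

theorem stmt7 (d ℓ : ℕ) (hd : 2 ≤ d) :
    Module.Finite ℝ (harmonicHomogeneous d ℓ) ∧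
      Module.finrank ℝ (harmonicHomogeneous d ℓ) =
        Nat.choose (ℓ + d - 1) (d - 1) - Nat.choose (ℓ + d - 3) (d - 1) := by
  have hchoose : (d + ℓ - 1).choose ℓ = (ℓ + d - 1).choose (d - 1) := by
    rw [show d + ℓ - 1 = ℓ + d - 1 by omega,
      ← Nat.choose_symm (by omega : d - 1 ≤ ℓ + d - 1), show ℓ + d - 1 - (d - 1) = ℓ by omega]
  rcases le_or_gt ℓ 1 with hℓ | hℓ
  · have heq : harmonicHomogeneous d ℓ = homogeneousSubmodule (Fin d) ℝ ℓ := by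
      rw [harmonicHomogeneous]
      exact inf_eq_left.mpr fun p hp => LinearMap.mem_ker.mpr (lap_eq_zero_of_le_one hℓ hp)
    rw [heq]
    refine ⟨homogFinite d ℓ, ?_⟩
    rw [finrank_homog, Nat.choose_eq_zero_of_lt (show ℓ + d - 3 < d - 1 by omega), Nat.sub_zero, hchoose]
  · have hmap := harmonic_eq_map d ℓ
    have heq : harmonicHomogeneous d ℓ =
        Submodule.map (homogeneousSubmodule (Fin d) ℝ ℓ).subtype
          (LinearMap.ker (lapRestrict d ℓ)) := hmap
    let e := Submodule.equivMapOfInjective (homogeneousSubmodule (Fin d) ℝ ℓ).subtype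
      (Submodule.injective_subtype _) (LinearMap.ker (lapRestrict d ℓ))
    constructor
    · rw [heq]
      exact Module.Finite.equiv e
    · rw [heq, Submodule.finrank_map_subtype_eq]
      have hrn := LinearMap.finrank_range_add_finrank_ker (lapRestrict d ℓ)
      have hrange : LinearMap.range (lapRestrict d ℓ) = ⊤ :=
        LinearMap.range_eq_top.mpr (lapRestrict_surjective (by omega) hℓ)
      rw [hrange, finrank_top, finrank_homog] at hrn
      have h2 : Module.finrank ℝ (homogeneousSubmodule (Fin d) ℝ ℓ) = (d + ℓ - 1).choose ℓ :=
        finrank_homog d ℓ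
    -- finrank ker = (d+ℓ-1).choose ℓ - (d+(ℓ-2)-1).choose (ℓ-2)
      have hk : Module.finrank ℝ (LinearMap.ker (lapRestrict d ℓ)) =
          (d + ℓ - 1).choose ℓ - (d + (ℓ - 2) - 1).choose (ℓ - 2) := by omega
      rw [hk, hchoose, show (d + (ℓ - 2) - 1).choose (ℓ - 2) = (ℓ + d - 3).choose (d - 1) from ?_]
      rw [show d + (ℓ - 2) - 1 = ℓ + d - 3 by omega,
        ← Nat.choose_symm (by omega : d - 1 ≤ ℓ + d - 3), show ℓ + d - 3 - (d - 1) = ℓ - 2 by omega]
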